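/- Define polynomials p_k ∈ ℤ[x] by p₁(x) = x+1 and p_{k+1}(x) = p_k((x+1)²/(4x)) · (4x)^{2^{k-1}}. Then p_k is a polynomial of degree 2^{k-1}, and in the field of rational functions ℚ(χ), substituting f² with f = (1+χ)/(1-χ) gives p_k(f²) = 2^{2^k-1} · (1+χ^{2^k})/(1-χ)^{2^k} for all k ≥ 1. -/

import Mathlib

open Polynomial


instance : CharZero (RatFunc ℚ) :=
  charZero_of_injective_algebraMap (RatFunc.algebraMap_injective ℚ)

noncomputable def Qp (q : Polynomial ℤ) (n : ℕ) : Polynomial ℤ :=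
  ∑ i ∈ Finset.range (n + 1), Polynomial.C (q.coeff i) * (X + 1) ^ (2 * i) * (4 * X) ^ (n - i)

lemma aeval_Qp (q : Polynomial ℤ) (n : ℕ) (hq : q.natDegree < n + 1) (t : RatFunc ℚ)
    (ht : t ≠ 0) :
    aeval t (Qp q n) = aeval ((t + 1) ^ 2 / (4 * t)) q * (4 * t) ^ n := by
  have h4t : (4 * t : RatFunc ℚ) ≠ 0 := by
    exact mul_ne_zero (by norm_num) ht
  rw [aeval_eq_sum_range' hq, Finset.sum_mul]
  simp only [Qp, map_sum, map_mul, map_pow, aeval_X, aeval_C, map_ofNat, map_add, map_one]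
  apply Finset.sum_congr rfl
  intro i hi
  have hin : i ≤ n := by simp at hi; omega
  have key : ((t + 1) ^ 2 / (4 * t)) ^ i * (4 * t) ^ n = (t + 1) ^ (2 * i) * (4 * t) ^ (n - i) := by
    rw [div_pow, ← pow_mul, show n = i + (n - i) by omega, pow_add]
    field_simp
    rw [Nat.add_sub_cancel_left]
  rw [Algebra.smul_def, mul_assoc, ← key, ← mul_assoc]

lemma natDegree_term_le (a : ℤ) (i m : ℕ) :
    (Polynomial.C a * (X + 1) ^ (2 * i) * (4 * X) ^ m).natDegree ≤ 2 * i + m := by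
  apply natDegree_mul_le.trans
  gcongr
  · apply natDegree_mul_le.trans
    simp only [natDegree_C, zero_add]
    apply natDegree_pow_le.trans
    have : ((X : Polynomial ℤ) + 1).natDegree ≤ 1 := by
      apply natDegree_add_le_of_degree_le natDegree_X_le
      simp
    calc 2 * i * (X + 1 : Polynomial ℤ).natDegree ≤ 2 * i * 1 := by gcongr
    _ = 2 * i := by ring
  · apply natDegree_pow_le.trans
    have : ((4 : Polynomial ℤ) * X).natDegree ≤ 1 := natDegree_mul_le.trans (by simp)
    calc m * ((4 : Polynomial ℤ) * X).natDegree ≤ m * 1 := by gcongr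
    _ = m := by ring

lemma coeff_Qp (q : Polynomial ℤ) (n : ℕ) : (Qp q n).coeff (2 * n) = q.coeff n := by
  rw [Qp, finset_sum_coeff, Finset.sum_eq_single n]
  · have hm : ((X + 1 : Polynomial ℤ) ^ (2 * n)).Monic := by
      have : ((X : Polynomial ℤ) + 1).Monic := by
        simpa using monic_X_add_C (1 : ℤ)
      exact this.pow _
    have hd : ((X + 1 : Polynomial ℤ) ^ (2 * n)).natDegree = 2 * n := by
      rw [natDegree_pow]
      have : ((X : Polynomial ℤ) + 1).natDegree = 1 := by
        simpa using natDegree_X_add_C (1 : ℤ)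
      rw [this, mul_one]
    simp only [Nat.sub_self, pow_zero, mul_one, coeff_C_mul]
    have hc := hm.coeff_natDegree
    rw [hd] at hc
    rw [hc, mul_one]
  · intro i hi hne
    have hin : i < n := by simp at hi; omega
    apply coeff_eq_zero_of_natDegree_lt
    calc (Polynomial.C (q.coeff i) * (X + 1) ^ (2 * i) * (4 * X) ^ (n - i)).natDegree
        ≤ 2 * i + (n - i) := natDegree_term_le _ _ _
      _ < 2 * n := by omega
  · intro h
    simp at h

lemma degree_Qp (q : Polynomial ℤ) (n : ℕ) (hq : q.natDegree = n) (hq0 : q ≠ 0) :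
    (Qp q n).degree = ((2 * n : ℕ) : WithBot ℕ) := by
  apply degree_eq_of_le_of_coeff_ne_zero
  · apply (degree_sum_le _ _).trans
    apply Finset.sup_le
    intro i hi
    have hin : i ≤ n := by simp at hi; omega
    apply degree_le_natDegree.trans
    exact Nat.cast_le.mpr ((natDegree_term_le _ _ _).trans (by omega))
  · rw [coeff_Qp, ← hq]
    exact mt leadingCoeff_eq_zero.mp hq0

noncomputable def ψ : Polynomial ℤ →+* RatFunc ℚ :=
  (algebraMap (Polynomial ℚ) (RatFunc ℚ)).comp (Polynomial.mapRingHom (Int.castRingHom ℚ))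

lemma aevalX_eq (q : Polynomial ℤ) :
    aeval (RatFunc.X : RatFunc ℚ) q = ψ q := by
  have h : ((aeval (RatFunc.X : RatFunc ℚ) : Polynomial ℤ →ₐ[ℤ] RatFunc ℚ) :
      Polynomial ℤ →+* RatFunc ℚ) = ψ := by
    apply Polynomial.ringHom_ext
    · intro a
      simp [ψ, map_intCast]
    · simp [ψ, RatFunc.algebraMap_X]
  exact DFunLike.congr_fun h q

lemma aevalX_inj : Function.Injective (fun q : Polynomial ℤ => aeval (RatFunc.X : RatFunc ℚ) q) := by
  have : Function.Injective ψ := by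
    apply (RatFunc.algebraMap_injective ℚ).comp
    exact Polynomial.map_injective _ Int.cast_injective
  simpa only [aevalX_eq] using this

lemma hCX : ∀ n : ℕ, 1 ≤ n →
    (RatFunc.X : RatFunc ℚ) ^ n ≠ 1 ∧ (RatFunc.X : RatFunc ℚ) ^ n ≠ -1 := by
  intro n hn
  constructor
  · intro h
    rw [← RatFunc.algebraMap_X, ← map_pow, ← map_one (algebraMap (Polynomial ℚ) (RatFunc ℚ))] at h
    have := RatFunc.algebraMap_injective ℚ h
    have h0 := congrArg (Polynomial.eval 0) this
    simp [zero_pow (by omega : n ≠ 0)] at h0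
  · intro h
    rw [← RatFunc.algebraMap_X, ← map_pow,
      show (-1 : RatFunc ℚ) = algebraMap (Polynomial ℚ) (RatFunc ℚ) (-1) by simp] at h
    have := RatFunc.algebraMap_injective ℚ h
    have h0 := congrArg (Polynomial.eval 0) this
    simp [zero_pow (by omega : n ≠ 0)] at h0

/-- The polynomials p_k with p₁(x) = x+1 and p_{k+1}(x) = p_k((x+1)²/(4x))·(4x)^{2^{k-1}}
(the recursion read in the field of rational functions ℚ(χ)) have degree 2^{k-1} and
satisfy p_k(f²) = 2^{2^k-1}·(1+χ^{2^k})/(1-χ)^{2^k} where f = (1+χ)/(1-χ). -/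
theorem stmt15 (p : ℕ → Polynomial ℤ) (h1 : p 1 = X + 1)
    (hrec : ∀ k : ℕ, 1 ≤ k →
      (Polynomial.aeval (RatFunc.X : RatFunc ℚ)) (p (k + 1)) =
        (Polynomial.aeval (((RatFunc.X + 1) ^ 2 / (4 * RatFunc.X)) : RatFunc ℚ)) (p k) *
          (4 * RatFunc.X : RatFunc ℚ) ^ (2 ^ (k - 1))) :
    ∀ k : ℕ, 1 ≤ k →
      (p k).degree = ((2 ^ (k - 1) : ℕ) : WithBot ℕ) ∧
      (Polynomial.aeval ((((1 + RatFunc.X) / (1 - RatFunc.X)) ^ 2 : RatFunc ℚ))) (p k) =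
        2 ^ (2 ^ k - 1) * (1 + RatFunc.X ^ (2 ^ k)) / (1 - RatFunc.X) ^ (2 ^ k) := by
  have main : ∀ k : ℕ, 1 ≤ k → (p k).degree = ((2 ^ (k - 1) : ℕ) : WithBot ℕ) ∧
      ∀ t : RatFunc ℚ, (∀ m : ℕ, 1 ≤ m → t ^ m ≠ 1 ∧ t ^ m ≠ -1) →
        aeval (((1 + t) / (1 - t)) ^ 2) (p k) =
          2 ^ (2 ^ k - 1) * (1 + t ^ 2 ^ k) / (1 - t) ^ 2 ^ k := by
    intro k hk
    induction k, hk using Nat.le_induction with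
    | base =>
      constructor
      · rw [h1]
        simpa using degree_X_add_C (1 : ℤ)
      · intro t hC
        have ht1 : (1 : RatFunc ℚ) - t ≠ 0 := by
          intro h
          exact (hC 1 le_rfl).1 (by rw [pow_one]; linear_combination -h)
        rw [h1]
        simp only [map_add, aeval_X, map_one]
        rw [div_pow]
        have h2 : ((1 : RatFunc ℚ) - t) ^ 2 ≠ 0 := pow_ne_zero _ ht1
        field_simp
        ring
    | succ k hk ih =>
      obtain ⟨hdeg, hval⟩ := ih
      set n := 2 ^ (k - 1) with hn
      have hp0 : p k ≠ 0 := by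
        intro h
        rw [h, degree_zero] at hdeg
        exact (by simp : ((n : ℕ) : WithBot ℕ) ≠ ⊥) hdeg.symm
      have hnd : (p k).natDegree = n := natDegree_eq_of_degree_eq_some hdeg
      have heq : p (k + 1) = Qp (p k) n := by
        apply aevalX_inj
        show aeval (RatFunc.X : RatFunc ℚ) (p (k + 1)) = aeval (RatFunc.X : RatFunc ℚ) (Qp (p k) n)
        rw [hrec k hk, aeval_Qp (p k) n (by omega) RatFunc.X RatFunc.X_ne_zero]
      have h2k : 2 * n = 2 ^ k := by
        rw [hn, ← pow_succ']
        congr 1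
        omega
      constructor
      · rw [heq, degree_Qp (p k) n hnd hp0, h2k]
        norm_num
      · intro t hC
        have ht1 : (1 : RatFunc ℚ) - t ≠ 0 := by
          intro h
          exact (hC 1 le_rfl).1 (by rw [pow_one]; linear_combination -h)
        have ht2 : (1 : RatFunc ℚ) + t ≠ 0 := by
          intro h
          exact (hC 1 le_rfl).2 (by rw [pow_one]; linear_combination h)
        have hC2 : ∀ m : ℕ, 1 ≤ m → (t ^ 2) ^ m ≠ 1 ∧ (t ^ 2) ^ m ≠ -1 := by
          intro m hm
          rw [← pow_mul]
          exact hC (2 * m) (by omega)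
        have hf : ((1 + t) / (1 - t) : RatFunc ℚ) ≠ 0 := div_ne_zero ht2 ht1
        have hf2 : (((1 + t) / (1 - t)) ^ 2 : RatFunc ℚ) ≠ 0 := pow_ne_zero _ hf
        have hts : (1 : RatFunc ℚ) - t ^ 2 ≠ 0 := by
          have : (1 : RatFunc ℚ) - t ^ 2 = (1 - t) * (1 + t) := by ring
          rw [this]; exact mul_ne_zero ht1 ht2
        have hpoint : ((((1 + t) / (1 - t)) ^ 2 + 1) ^ 2 / (4 * ((1 + t) / (1 - t)) ^ 2)
            : RatFunc ℚ) = ((1 + t ^ 2) / (1 - t ^ 2)) ^ 2 := by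
          field_simp
          ring
        rw [heq, aeval_Qp (p k) n (by omega) _ hf2, hpoint, hval (t ^ 2) hC2]
        -- exponent bookkeeping
        have hM : 1 ≤ n := Nat.one_le_two_pow
        have e1 : 2 ^ k = 2 * n := h2k.symm
        have e2 : 2 ^ (k + 1) = 4 * n := by
          rw [pow_succ, e1]; ring
        rw [e1, e2]
        have h2p : (2 : RatFunc ℚ) ^ (4 * n - 1) = 2 ^ (2 * n - 1) * 2 ^ (2 * n) := by
          rw [← pow_add]
          congr 1
          omega
        have htp : ((t ^ 2) ^ (2 * n) : RatFunc ℚ) = t ^ (4 * n) := by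
          rw [← pow_mul]
          congr 1
          ring
        have hA4 : ((1 - t) ^ (4 * n) : RatFunc ℚ) = (1 - t) ^ (2 * n) * (1 - t) ^ (2 * n) := by
          rw [← pow_add]
          congr 1
          omega
        have hsq : ((1 : RatFunc ℚ) - t ^ 2) = (1 - t) * (1 + t) := by ring
        have hGM : ((4 * ((1 + t) / (1 - t)) ^ 2 : RatFunc ℚ)) ^ n
            = 2 ^ (2 * n) * ((1 + t) ^ (2 * n) / (1 - t) ^ (2 * n)) := by
          have h4 : ((4 : RatFunc ℚ)) ^ n = 2 ^ (2 * n) := by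
            rw [show (4 : RatFunc ℚ) = 2 ^ 2 by norm_num, ← pow_mul]
          rw [mul_pow, h4, ← pow_mul, div_pow]
        rw [h2p, htp, hA4, hsq, hGM, mul_pow]
        have hA : ((1 - t) ^ (2 * n) : RatFunc ℚ) ≠ 0 := pow_ne_zero _ ht1
        have hB : ((1 + t) ^ (2 * n) : RatFunc ℚ) ≠ 0 := pow_ne_zero _ ht2
        field_simp
  intro k hk
  exact ⟨(main k hk).1, (main k hk).2 RatFunc.X hCX⟩
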